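/- Let τ ∈ (0,1), let K : ℝ → ℝ be a nonnegative measurable kernel with ∫_{-∞}^{∞} K(t) dt = 1, K symmetric (K(−t) = K(t) for all t), and ζ₁ = ∫_{-∞}^{∞} |t| K(t) dt < ∞, and let h > 0. Then for every r ∈ ℝ, ρ_τ(r) ≤ ℓ_h(r) ≤ ρ_τ(r) + max(τ, 1−τ) · h · ζ₁, where ℓ_h is the convolution-smoothed quantile loss. In particular ℓ_h converges to ρ_τ uniformly on ℝ as h → 0⁺. -/
import Mathlib


open MeasureTheory

/-- The quantile loss `ρ_τ(t) = t (τ - 1{t<0})`. -/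
noncomputable def rho (τ t : ℝ) : ℝ := t * (τ - if t < 0 then 1 else 0)

/-- The convolution-smoothed quantile loss
`ℓ_h(r) = (1/h) ∫ ρ_τ(t) K((t - r)/h) dt`. -/
noncomputable def smoothedLoss (τ : ℝ) (K : ℝ → ℝ) (h r : ℝ) : ℝ :=
  (1 / h) * ∫ t, rho τ t * K ((t - r) / h)

lemma rho_eq_max (τ t : ℝ) : rho τ t = max (τ * t) ((τ - 1) * t) := by
  unfold rho
  rcases lt_or_ge t 0 with h | h
  · rw [if_pos h, max_eq_right (by nlinarith)]; ring
  · rw [if_neg (not_lt.2 h), max_eq_left (by nlinarith)]; ring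

lemma rho_continuous (τ : ℝ) : Continuous (rho τ) := by
  have : rho τ = fun t => max (τ * t) ((τ - 1) * t) := funext (rho_eq_max τ)
  rw [this]
  fun_prop

lemma abs_rho_le (τ : ℝ) (hτ : τ ∈ Set.Ioo (0 : ℝ) 1) (t : ℝ) : |rho τ t| ≤ |t| := by
  obtain ⟨h0, h1⟩ := hτ
  rw [rho_eq_max]
  rcases abs_cases t with ⟨ht, htn⟩ | ⟨ht, htn⟩ <;>
    rw [abs_le] <;> constructor <;>
      [skip; skip; skip; skip] <;>
    first
    | (apply neg_le_of_neg_le; nlinarith [le_max_left (τ * t) ((τ - 1) * t),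
        le_max_right (τ * t) ((τ - 1) * t)])
    | (apply max_le <;> nlinarith)

/-- change of variables: `ℓ_h(r) = ∫ ρ_τ(r + h u) K(u) du`. -/
lemma smoothedLoss_eq (τ : ℝ) (K : ℝ → ℝ) {h : ℝ} (hh : 0 < h) (r : ℝ) :
    smoothedLoss τ K h r = ∫ u, rho τ (r + h * u) * K u := by
  unfold smoothedLoss
  have e1 : (∫ t, rho τ t * K ((t - r) / h))
      = ∫ s, rho τ (s + r) * K (s / h) := by
    rw [← integral_add_right_eq_self (fun t => rho τ t * K ((t - r) / h)) r]
    simp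
  have e2 : (∫ u, rho τ (h * u + r) * K ((h * u) / h))
      = |h⁻¹| • ∫ s, rho τ (s + r) * K (s / h) :=
    Measure.integral_comp_mul_left (fun s => rho τ (s + r) * K (s / h)) h
  have e3 : ∀ u : ℝ, rho τ (h * u + r) * K ((h * u) / h) = rho τ (r + h * u) * K u := by
    intro u
    have hu : h * u / h = u := by field_simp
    rw [hu, add_comm]
  rw [e1, ← (funext e3 : _), e2]
  rw [abs_of_pos (inv_pos.2 hh), smul_eq_mul, one_div]

theorem stmt2 (τ : ℝ) (hτ : τ ∈ Set.Ioo (0 : ℝ) 1)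
    (K : ℝ → ℝ) (hKmeas : Measurable K) (hKnonneg : ∀ t, 0 ≤ K t)
    (hKint : ∫ t, K t = 1)
    (hKsymm : ∀ t, K (-t) = K t)
    (hζ1 : Integrable (fun t => |t| * K t)) :
    (∀ h : ℝ, 0 < h → ∀ r : ℝ,
        rho τ r ≤ smoothedLoss τ K h r ∧
          smoothedLoss τ K h r ≤ rho τ r + max τ (1 - τ) * h * (∫ t, |t| * K t)) ∧
      TendstoUniformly (fun h => smoothedLoss τ K h) (rho τ)
        (nhdsWithin (0 : ℝ) (Set.Ioi 0)) := by
  obtain ⟨hτ0, hτ1⟩ := hτ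
  set M : ℝ := max τ (1 - τ) with hM
  have hM0 : 0 < M := lt_max_of_lt_left hτ0
  set ζ : ℝ := ∫ t, |t| * K t with hζ
  have hζ0 : 0 ≤ ζ := integral_nonneg fun t => mul_nonneg (abs_nonneg t) (hKnonneg t)
  -- K is integrable
  have hKi : Integrable K := by
    by_contra hc
    rw [integral_undef hc] at hKint
    exact one_ne_zero hKint.symm
  -- u * K u is integrable
  have huKi : Integrable (fun u => u * K u) := by
    refine hζ1.mono' (measurable_id.mul hKmeas).aestronglyMeasurable ?_
    filter_upwards with u
    rw [Real.norm_eq_abs, abs_mul, abs_of_nonneg (hKnonneg u)]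
  -- ∫ u K = 0 by symmetry
  have hintuK : (∫ u, u * K u) = 0 := by
    have := integral_neg_eq_self (fun u : ℝ => u * K u) volume
    simp only [hKsymm, neg_mul] at this
    have h2 : (∫ u, -(u * K u)) = ∫ u, u * K u := this
    rw [integral_neg] at h2
    linarith
  -- key: pointwise equality and integrability of integrand
  have hmeas_rho : Measurable (rho τ) := (rho_continuous τ).measurable
  have hInt : ∀ (h r : ℝ), 0 < h → Integrable (fun u => rho τ (r + h * u) * K u) := by
    intro h r hh
    refine Integrable.mono' ((hKi.const_mul |r|).add (hζ1.const_mul h)) ?_ ?_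
    · exact ((rho_continuous τ).comp (by fun_prop)).measurable.mul hKmeas
        |>.aestronglyMeasurable
    · filter_upwards with u
      rw [Real.norm_eq_abs, abs_mul, abs_of_nonneg (hKnonneg u)]
      have h1 : |rho τ (r + h * u)| ≤ |r| + h * |u| := by
        calc |rho τ (r + h * u)| ≤ |r + h * u| := abs_rho_le τ ⟨hτ0, hτ1⟩ _
          _ ≤ |r| + |h * u| := abs_add_le _ _
          _ = |r| + h * |u| := by rw [abs_mul, abs_of_pos hh]
      have := mul_le_mul_of_nonneg_right h1 (hKnonneg u)
      calc |rho τ (r + h * u)| * K u ≤ (|r| + h * |u|) * K u := this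
        _ = |r| * K u + h * (|u| * K u) := by ring
  -- linear integrals
  have hlin : ∀ (c h r : ℝ), (∫ u, (c * (r + h * u)) * K u) = c * r := by
    intro c h r
    have : (fun u => (c * (r + h * u)) * K u)
        = fun u => (c * r) * K u + (c * h) * (u * K u) := by
      funext u; ring
    rw [this, integral_add (hKi.const_mul _) (huKi.const_mul _),
      integral_const_mul, integral_const_mul, hintuK, hKint]
    ring
  -- the two-sided bound
  have key : ∀ h : ℝ, 0 < h → ∀ r : ℝ,
      rho τ r ≤ smoothedLoss τ K h r ∧
        smoothedLoss τ K h r ≤ rho τ r + M * h * ζ := by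
    intro h hh r
    rw [smoothedLoss_eq τ K hh r]
    constructor
    · -- lower bound
      rw [rho_eq_max]
      have low : ∀ c : ℝ, (∀ t : ℝ, c * t ≤ rho τ t) →
          c * r ≤ ∫ u, rho τ (r + h * u) * K u := by
        intro c hc
        calc c * r = ∫ u, (c * (r + h * u)) * K u := (hlin c h r).symm
          _ ≤ ∫ u, rho τ (r + h * u) * K u := by
              apply integral_mono ?_ (hInt h r hh) ?_
              · have : (fun u => (c * (r + h * u)) * K u)
                    = fun u => (c * r) * K u + (c * h) * (u * K u) := by
                  funext u; ring
                rw [this]; exact (hKi.const_mul _).add (huKi.const_mul _)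
              · intro u
                exact mul_le_mul_of_nonneg_right (hc _) (hKnonneg u)
      apply max_le
      · exact low τ fun t => by rw [rho_eq_max]; exact le_max_left _ _
      · exact low (τ - 1) fun t => by rw [rho_eq_max]; exact le_max_right _ _
    · -- upper bound
      have hub : ∀ t : ℝ, rho τ (r + h * t) ≤ rho τ r + M * (h * |t|) := by
        intro t
        rw [rho_eq_max, rho_eq_max]
        have habs : ∀ c : ℝ, |c| ≤ M → c * (h * t) ≤ M * (h * |t|) := by
          intro c hc
          calc c * (h * t) ≤ |c * (h * t)| := le_abs_self _
            _ = |c| * (h * |t|) := by rw [abs_mul, abs_mul, abs_of_pos hh]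
            _ ≤ M * (h * |t|) := by
                apply mul_le_mul_of_nonneg_right hc
                positivity
        apply max_le
        · have : τ * (r + h * t) = τ * r + τ * (h * t) := by ring
          rw [this]
          exact add_le_add (le_max_left _ _)
            (habs τ (by rw [abs_of_pos hτ0]; exact le_max_left _ _))
        · have : (τ - 1) * (r + h * t) = (τ - 1) * r + (τ - 1) * (h * t) := by ring
          rw [this]
          exact add_le_add (le_max_right _ _)
            (habs (τ - 1) (by rw [abs_of_neg (by linarith : τ - 1 < 0)]; have := le_max_right τ (1 - τ); linarith))
      calc (∫ u, rho τ (r + h * u) * K u)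
          ≤ ∫ u, (rho τ r + M * (h * |u|)) * K u := by
            apply integral_mono (hInt h r hh) ?_ ?_
            · have : (fun u => (rho τ r + M * (h * |u|)) * K u)
                  = fun u => (rho τ r) * K u + (M * h) * (|u| * K u) := by
                funext u; ring
              rw [this]; exact (hKi.const_mul _).add (hζ1.const_mul _)
            · intro u
              exact mul_le_mul_of_nonneg_right (hub u) (hKnonneg u)
        _ = rho τ r + M * h * ζ := by
            have : (fun u => (rho τ r + M * (h * |u|)) * K u)
                = fun u => (rho τ r) * K u + (M * h) * (|u| * K u) := by
              funext u; ring
            rw [this, integral_add (hKi.const_mul _) (hζ1.const_mul _),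
              integral_const_mul, integral_const_mul, hKint, hζ]
            ring
  refine ⟨key, ?_⟩
  rw [Metric.tendstoUniformly_iff]
  intro ε hε
  have hC : 0 < M * ζ + 1 := by positivity
  have hmem : Set.Ioo (0 : ℝ) (ε / (M * ζ + 1)) ∈ nhdsWithin (0 : ℝ) (Set.Ioi 0) :=
    Ioo_mem_nhdsGT_of_mem ⟨le_refl 0, by positivity⟩
  filter_upwards [hmem] with h hh x
  obtain ⟨hh0, hh1⟩ := hh
  obtain ⟨hlo, hhi⟩ := key h hh0 x
  rw [Real.dist_eq, abs_sub_comm, abs_of_nonneg (by linarith)]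
  have h1 : smoothedLoss τ K h x - rho τ x ≤ M * ζ * h := by nlinarith
  have h2 : M * ζ * h < ε := by
    calc M * ζ * h ≤ (M * ζ + 1) * h := by nlinarith
      _ < (M * ζ + 1) * (ε / (M * ζ + 1)) := by
          exact mul_lt_mul_of_pos_left hh1 hC
      _ = ε := by field_simp
  linarith
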